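/- Let μ > 0 and define R(X) = Σ_{i=1}^{N} f_μ(σ_i(X)). Then for every X ∈ ℝ^{m×n}, R(X) ≤ μ·rank(X), and equality holds if X has no singular value in the open interval (0, √μ), i.e. if every nonzero singular value of X is at least √μ. -/

import Mathlib

noncomputable section
open Matrix Real

theorem Matrix.isHermitian_transpose_mul_self {m n : Type*} [Fintype m]
    (A : Matrix m n ℝ) : (Aᵀ * A).IsHermitian := by
  simpa using Matrix.isHermitian_conjTranspose_mul_self A

/-- The singular values of a real `m × n` matrix, in descending order,
indexed by `Fin (min m n)`: square roots of the eigenvalues of `Xᴴ * X`. -/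
def sVal {m n : ℕ} (X : Matrix (Fin m) (Fin n) ℝ) (i : Fin (min m n)) : ℝ :=
  Real.sqrt ((Matrix.isHermitian_transpose_mul_self X).eigenvalues
    (Tuple.sort (fun j => -(Matrix.isHermitian_transpose_mul_self X).eigenvalues j)
      (Fin.castLE (Nat.min_le_right m n) i)))

def regR {m n : ℕ} (f : ℝ → ℝ) (X : Matrix (Fin m) (Fin n) ℝ) : ℝ :=
  ∑ i, f (sVal X i)

def colNormSq {m k : ℕ} (B : Matrix (Fin m) (Fin k) ℝ) (i : Fin k) : ℝ :=
  ∑ j, (B j i) ^ 2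

def colNorm {m k : ℕ} (B : Matrix (Fin m) (Fin k) ℝ) (i : Fin k) : ℝ :=
  Real.sqrt (colNormSq B i)

def Rt {m n k : ℕ} (f : ℝ → ℝ) (B : Matrix (Fin m) (Fin k) ℝ)
    (C : Matrix (Fin n) (Fin k) ℝ) : ℝ :=
  ∑ i, f ((colNormSq B i + colNormSq C i) / 2)

/-- Frobenius inner product `⟨X,Y⟩ = tr(XᵀY)`. -/
def frobInner {m n : ℕ} (X Y : Matrix (Fin m) (Fin n) ℝ) : ℝ :=
  (Xᵀ * Y).trace

def frobSq {m n : ℕ} (X : Matrix (Fin m) (Fin n) ℝ) : ℝ :=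
  (Xᵀ * X).trace

def fmu (μ x : ℝ) : ℝ := μ - max (Real.sqrt μ - x) 0 ^ 2

lemma aux_downclosed_iff {N r : ℕ} (P : Fin N → Prop) [DecidablePred P]
    (hdc : ∀ j k : Fin N, j ≤ k → P k → P j)
    (hcard : (Finset.univ.filter P).card = r) (j : Fin N) : P j ↔ (j : ℕ) < r := by
  constructor
  · intro hP
    have hsub : Finset.Iic j ⊆ Finset.univ.filter P := fun k hk =>
      Finset.mem_filter.2 ⟨Finset.mem_univ _, hdc k j (Finset.mem_Iic.1 hk) hP⟩
    have := Finset.card_le_card hsub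
    rw [hcard, Fin.card_Iic] at this
    omega
  · intro h
    by_contra hP
    have hsub : Finset.univ.filter P ⊆ Finset.Iio j := by
      intro k hk
      rw [Finset.mem_Iio]
      by_contra hkj
      exact hP (hdc j k (le_of_not_gt hkj) (Finset.mem_filter.1 hk).2)
    have := Finset.card_le_card hsub
    rw [hcard, Fin.card_Iio] at this
    omega

lemma aux_card_lt {N r : ℕ} (h : r ≤ N) :
    (Finset.univ.filter (fun i : Fin N => (i : ℕ) < r)).card = r := by
  rw [← Fintype.card_subtype]
  have e : {i : Fin N // (i : ℕ) < r} ≃ Fin r :=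
    { toFun := fun x => ⟨x.1, x.2⟩
      invFun := fun i => ⟨⟨i, lt_of_lt_of_le i.2 h⟩, i.2⟩
      left_inv := fun x => rfl
      right_inv := fun i => rfl }
  rw [Fintype.card_congr e, Fintype.card_fin]

/-- For `μ > 0`, `R(X) = Σᵢ f_μ(σᵢ(X)) ≤ μ · rank X`, with equality if
`X` has no singular value in the open interval `(0, √μ)`. -/
theorem regR_le_mu_rank {m n : ℕ} (μ : ℝ) (hμ : 0 < μ) (X : Matrix (Fin m) (Fin n) ℝ) :
    regR (fmu μ) X ≤ μ * X.rank ∧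
    ((∀ i, sVal X i ∉ Set.Ioo 0 (Real.sqrt μ)) → regR (fmu μ) X = μ * X.rank) := by
  classical
  set hH := Matrix.isHermitian_transpose_mul_self X with hHdef
  set e : Fin n → ℝ := hH.eigenvalues with hedef
  set σp := Tuple.sort (fun j => -e j) with hσdef
  set g : Fin n → ℝ := fun j => e (σp j) with hgdef
  have hg_nonneg : ∀ j, 0 ≤ g j := fun j =>
    Matrix.eigenvalues_conjTranspose_mul_self_nonneg X (σp j)
  have hg_anti : Antitone g := by
    have hmono : Monotone ((fun j => -e j) ∘ σp) := Tuple.monotone_sort _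
    intro a b hab
    have := hmono hab
    simpa [g, Function.comp] using neg_le_neg_iff.mp this
  set r := X.rank with hrdef
  -- count of nonzero eigenvalues equals rank
  have hcount : (Finset.univ.filter (fun j => g j ≠ 0)).card = r := by
    have h1 : (Xᴴ * X).rank = Fintype.card {i // e i ≠ 0} :=
      hH.rank_eq_card_non_zero_eigs
    have h2 : (Xᴴ * X).rank = r := Matrix.rank_conjTranspose_mul_self X
    have h3 : Fintype.card {j // g j ≠ 0} = Fintype.card {i // e i ≠ 0} :=
      Fintype.card_congr (Equiv.subtypeEquiv σp (fun j => by simp [g]))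
    rw [← Fintype.card_subtype, h3, ← h1, h2]
  have hiff : ∀ j : Fin n, g j ≠ 0 ↔ (j : ℕ) < r := by
    refine aux_downclosed_iff _ (fun j k hjk hk => ?_) hcount
    have := hg_anti hjk
    have hk' : 0 < g k := lt_of_le_of_ne (hg_nonneg k) (Ne.symm hk)
    exact ne_of_gt (lt_of_lt_of_le hk' this)
  have hr_le : r ≤ min m n := by
    refine le_min ?_ ?_
    · simpa using X.rank_le_card_height
    · simpa using X.rank_le_card_width
  -- sVal in terms of g
  have hsval : ∀ i : Fin (min m n),
      sVal X i = Real.sqrt (g (Fin.castLE (Nat.min_le_right m n) i)) := fun i => rfl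
  have hterm0 : ∀ i : Fin (min m n), ¬ ((i : ℕ) < r) → fmu μ (sVal X i) = 0 := by
    intro i hi
    have hg0 : g (Fin.castLE (Nat.min_le_right m n) i) = 0 := by
      by_contra h
      exact hi ((hiff _).mp h)
    rw [hsval i, hg0]
    simp [fmu, Real.sq_sqrt hμ.le, Real.sqrt_nonneg]
  have htermle : ∀ i : Fin (min m n), fmu μ (sVal X i) ≤ μ := fun i => by
    simp [fmu, sq_nonneg]
  -- the card computation
  have hcard2 : (Finset.univ.filter (fun i : Fin (min m n) => (i : ℕ) < r)).card = r :=
    aux_card_lt hr_le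
  constructor
  · calc regR (fmu μ) X ≤ ∑ i : Fin (min m n), (if (i : ℕ) < r then μ else 0) := by
          refine Finset.sum_le_sum fun i _ => ?_
          by_cases hi : (i : ℕ) < r
          · simpa [hi] using htermle i
          · simp [hi, hterm0 i hi]
      _ = μ * r := by
          rw [← Finset.sum_filter, Finset.sum_const, hcard2, nsmul_eq_mul, mul_comm]
  · intro hcond
    have hterm1 : ∀ i : Fin (min m n), (i : ℕ) < r → fmu μ (sVal X i) = μ := by
      intro i hi
      have hg0 : g (Fin.castLE (Nat.min_le_right m n) i) ≠ 0 := (hiff _).mpr hi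
      have hgpos : 0 < g (Fin.castLE (Nat.min_le_right m n) i) :=
        lt_of_le_of_ne (hg_nonneg _) (Ne.symm hg0)
      have hspos : 0 < sVal X i := by rw [hsval]; exact Real.sqrt_pos.mpr hgpos
      have := hcond i
      rw [Set.mem_Ioo, not_and] at this
      have hge : Real.sqrt μ ≤ sVal X i := le_of_not_gt (this hspos)
      have : max (Real.sqrt μ - sVal X i) 0 = 0 := max_eq_right (by linarith)
      simp [fmu, this]
    have : regR (fmu μ) X = ∑ i : Fin (min m n), (if (i : ℕ) < r then μ else 0) := by
      refine Finset.sum_congr rfl fun i _ => ?_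
      by_cases hi : (i : ℕ) < r
      · simp [hi, hterm1 i hi]
      · simp [hi, hterm0 i hi]
    rw [this, ← Finset.sum_filter, Finset.sum_const, hcard2, nsmul_eq_mul, mul_comm]
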